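/- arXiv:1309.0154 — 2 statements merged into one kernel-verified Lean document; each statement's English description precedes it below -/
import Mathlib

section
/- Let f be the Fibonacci sequence with f_0 = f_1 = 1. For any real sequence x = (x_k) (with x_{−1} = 0), define y_k = (f_k/f_{k+1}) x_k − (f_{k+1}/f_k) x_{k−1}. Then x_k = ∑_{j=0}^{k} (f_{k+1}²/(f_j f_{j+1})) y_j for all k ∈ ℕ. -/
open Filter Topology

def fibo : ℕ → ℕ
  | 0 => 1
  | 1 => 1
  | n + 2 => fibo (n + 1) + fibo n

noncomputable def Fhat (x : ℕ → ℝ) : ℕ → ℝ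
  | 0 => (fibo 0 : ℝ) / fibo 1 * x 0
  | k + 1 => (fibo (k + 1) : ℝ) / fibo (k + 2) * x (k + 1)
      - (fibo (k + 2) : ℝ) / fibo (k + 1) * x k

noncomputable def xseq (y : ℕ → ℝ) (k : ℕ) : ℝ :=
  ∑ j ∈ Finset.range (k + 1), ((fibo (k + 1) : ℝ) ^ 2 / ((fibo j : ℝ) * fibo (j + 1))) * y j

lemma fibo_pos : ∀ n, 0 < fibo n
  | 0 => one_pos
  | 1 => one_pos
  | n + 2 => add_pos (fibo_pos (n + 1)) (fibo_pos n)

lemma fibo_ne (n : ℕ) : (fibo n : ℝ) ≠ 0 :=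
  ne_of_gt (by exact_mod_cast fibo_pos n)

theorem xseq_of_Fhat (x : ℕ → ℝ) (k : ℕ) :
    x k = xseq (Fhat x) k := by
  induction k with
  | zero => simp [xseq, Fhat, fibo]
  | succ k ih =>
    have h1 := fibo_ne (k + 1)
    have h2 := fibo_ne (k + 2)
    have key : xseq (Fhat x) (k + 1)
        = ((fibo (k + 2) : ℝ) ^ 2 / (fibo (k + 1) : ℝ) ^ 2) * xseq (Fhat x) k
          + ((fibo (k + 2) : ℝ) ^ 2 / ((fibo (k + 1) : ℝ) * (fibo (k + 2) : ℝ)))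
            * Fhat x (k + 1) := by
      rw [xseq, Finset.sum_range_succ, xseq, Finset.mul_sum]
      congr 1
      apply Finset.sum_congr rfl
      intro j _
      have hj := fibo_ne j
      have hj1 := fibo_ne (j + 1)
      field_simp
    rw [key, ← ih]
    show x (k + 1) = _ + _ * ((fibo (k + 1) : ℝ) / fibo (k + 2) * x (k + 1)
      - (fibo (k + 2) : ℝ) / fibo (k + 1) * x k)
    field_simp
    ring
end

section
/- Let f be the Fibonacci sequence with f_0 = f_1 = 1, and let (p_k) be bounded strictly positive with M = max{1, sup p_k}. Define g(x) = sup_k |(f_k/f_{k+1})x_k − (f_{k+1}/f_k)x_{k−1}|^{p_k/M} on the space c_0(F̂,p) = {x : lim_n |(f_n/f_{n+1})x_n − (f_{n+1}/f_n)x_{n−1}|^{p_n} = 0} (with x_{−1}=0). Then g is a paranorm on c_0(F̂,p): g(0)=0, g(x)=g(−x), g(x+z) ≤ g(x)+g(z), and g(αx) ≤ max{1,|α|} g(x) for all scalars α. -/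
open Filter Topology

lemma Fhat_zero (k : ℕ) : Fhat 0 k = 0 := by
  cases k <;> simp [Fhat]

lemma Fhat_neg (x : ℕ → ℝ) (k : ℕ) : Fhat (-x) k = -Fhat x k := by
  cases k <;> [skip; skip] <;> · simp [Fhat]; try ring

lemma Fhat_add (x z : ℕ → ℝ) (k : ℕ) : Fhat (x + z) k = Fhat x k + Fhat z k := by
  cases k <;> (simp [Fhat]; ring)

lemma Fhat_smul (α : ℝ) (x : ℕ → ℝ) (k : ℕ) : Fhat (α • x) k = α * Fhat x k := by
  cases k <;> (simp [Fhat]; ring)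

lemma rpow_add_le_add_rpow' {a b t : ℝ} (ha : 0 ≤ a) (hb : 0 ≤ b) (ht : 0 ≤ t)
    (ht1 : t ≤ 1) : (a + b) ^ t ≤ a ^ t + b ^ t := by
  have := NNReal.rpow_add_le_add_rpow a.toNNReal b.toNNReal ht ht1
  have h := (NNReal.coe_le_coe).2 this
  push_cast at h
  rwa [Real.coe_toNNReal _ ha, Real.coe_toNNReal _ hb] at h

theorem paranorm_c0_Fhat (p : ℕ → ℝ) (H : ℝ) (hp : ∀ k, 0 < p k) (hH : ∀ k, p k ≤ H)
    (M : ℝ) (hM : M = max 1 H)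
    (g : (ℕ → ℝ) → ℝ) (hg : ∀ x, g x = ⨆ k, |Fhat x k| ^ (p k / M))
    (x z : ℕ → ℝ)
    (hx : Tendsto (fun n => |Fhat x n| ^ p n) atTop (𝓝 0))
    (hz : Tendsto (fun n => |Fhat z n| ^ p n) atTop (𝓝 0)) :
    g 0 = 0 ∧ g x = g (-x) ∧ g (x + z) ≤ g x + g z ∧
      ∀ α : ℝ, g (α • x) ≤ max 1 |α| * g x := by
  have hM1 : 1 ≤ M := hM ▸ le_max_left 1 H
  have hM0 : 0 < M := lt_of_lt_of_le one_pos hM1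
  have hpM : ∀ k, p k ≤ M := fun k => (hH k).trans (hM ▸ le_max_right 1 H)
  have ht0 : ∀ k, 0 < p k / M := fun k => div_pos (hp k) hM0
  have ht1 : ∀ k, p k / M ≤ 1 := fun k => (div_le_one hM0).2 (hpM k)
  -- boundedness
  have key : ∀ y : ℕ → ℝ, Tendsto (fun n => |Fhat y n| ^ p n) atTop (𝓝 0) →
      BddAbove (Set.range fun k => |Fhat y k| ^ (p k / M)) := by
    intro y hy
    have h1 : Tendsto (fun n => (|Fhat y n| ^ p n) ^ (1 / M)) atTop (𝓝 (0 ^ (1 / M))) :=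
      hy.rpow_const (Or.inr (by positivity))
    rw [Real.zero_rpow (by positivity)] at h1
    have h2 : (fun n => (|Fhat y n| ^ p n) ^ (1 / M)) = fun n => |Fhat y n| ^ (p n / M) := by
      funext n
      rw [← Real.rpow_mul (abs_nonneg _), mul_one_div]
    rw [h2] at h1
    exact h1.bddAbove_range
  have hbx := key x hx
  have hbz := key z hz
  have hgx0 : 0 ≤ g x := by
    rw [hg]; exact Real.iSup_nonneg fun k => Real.rpow_nonneg (abs_nonneg _) _
  refine ⟨?_, ?_, ?_, ?_⟩
  · rw [hg]
    have : ∀ k, |Fhat 0 k| ^ (p k / M) = 0 := fun k => by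
      rw [Fhat_zero, abs_zero, Real.zero_rpow (ne_of_gt (ht0 k))]
    simp only [this, ciSup_const]
  · rw [hg, hg]
    congr 1; funext k; rw [Fhat_neg, abs_neg]
  · rw [hg]
    rcases isEmpty_or_nonempty ℕ with h | h
    · exact absurd h (not_isEmpty_of_nonempty ℕ)
    apply ciSup_le
    intro k
    have h1 : |Fhat (x + z) k| ^ (p k / M) ≤ |Fhat x k| ^ (p k / M) + |Fhat z k| ^ (p k / M) := by
      calc |Fhat (x + z) k| ^ (p k / M)
          ≤ (|Fhat x k| + |Fhat z k|) ^ (p k / M) := by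
            apply Real.rpow_le_rpow (abs_nonneg _) _ (le_of_lt (ht0 k))
            rw [Fhat_add]; exact abs_add_le _ _
        _ ≤ |Fhat x k| ^ (p k / M) + |Fhat z k| ^ (p k / M) :=
            rpow_add_le_add_rpow' (abs_nonneg _) (abs_nonneg _) (le_of_lt (ht0 k)) (ht1 k)
    refine h1.trans (add_le_add ?_ ?_)
    · rw [hg]; exact le_ciSup hbx k
    · rw [hg]; exact le_ciSup hbz k
  · intro α
    rw [hg]
    apply ciSup_le
    intro k
    have h1 : |Fhat (α • x) k| ^ (p k / M) = |α| ^ (p k / M) * |Fhat x k| ^ (p k / M) := by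
      rw [Fhat_smul, abs_mul, Real.mul_rpow (abs_nonneg _) (abs_nonneg _)]
    rw [h1]
    have h2 : |α| ^ (p k / M) ≤ max 1 |α| := by
      rcases le_or_gt |α| 1 with h | h
      · exact (Real.rpow_le_one (abs_nonneg _) h (le_of_lt (ht0 k))).trans (le_max_left _ _)
      · calc |α| ^ (p k / M) ≤ |α| ^ (1 : ℝ) :=
              Real.rpow_le_rpow_of_exponent_le h.le (ht1 k)
          _ = |α| := Real.rpow_one _
          _ ≤ max 1 |α| := le_max_right _ _
    have h3 : |Fhat x k| ^ (p k / M) ≤ g x := by rw [hg]; exact le_ciSup hbx k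
    calc |α| ^ (p k / M) * |Fhat x k| ^ (p k / M)
        ≤ max 1 |α| * (g x) :=
          mul_le_mul h2 h3 (Real.rpow_nonneg (abs_nonneg _) _)
            (le_trans zero_le_one (le_max_left _ _))
      _ = max 1 |α| * g x := rfl
end
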